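/- Let B be a Boolean algebra and ℐ an ideal on B admitting a lifting l : B/ℐ → B (a Boolean homomorphism with l(b/ℐ)/ℐ = b/ℐ for all b). If A is an ℵ₀-ideal subalgebra of B with l[A/ℐ] ⊆ A, then A/ℐ is an ℵ₀-ideal subalgebra of B/ℐ. -/

import Mathlib

/-- `A` is a (Boolean) subalgebra of the ambient Boolean algebra. -/
def IsSubalg {B : Type*} [BooleanAlgebra B] (A : Set B) : Prop :=
  ⊥ ∈ A ∧ ⊤ ∈ A ∧ (∀ x ∈ A, ∀ y ∈ A, x ⊔ y ∈ A) ∧ (∀ x ∈ A, ∀ y ∈ A, x ⊓ y ∈ A) ∧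
    ∀ x ∈ A, xᶜ ∈ A

/-- `A` is ℵ₀-ideal relative to `S`: for every `b ∈ S \ A` the ideal
`{a ∈ A : a ≤ b}` has a countable cofinal subset. -/
def Aleph0IdealIn {B : Type*} [BooleanAlgebra B] (A S : Set B) : Prop :=
  ∀ b ∈ S, b ∉ A → ∃ C : Set B, C.Countable ∧ C ⊆ A ∧ (∀ c ∈ C, c ≤ b) ∧
    ∀ a ∈ A, a ≤ b → ∃ c ∈ C, a ≤ c

/-- `A` is an ℵ₀-ideal subalgebra of the whole algebra. -/
def Aleph0Ideal {B : Type*} [BooleanAlgebra B] (A : Set B) : Prop :=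
  Aleph0IdealIn A Set.univ


/-- Quotients by ideals with a lifting.  The quotient `B/ℐ` is represented by a
surjective homomorphism `π : B → Q` of Boolean algebras whose kernel is `ℐ`, and
`l : Q → B` is a lifting, i.e. a Boolean homomorphism with `π ∘ l = id`.  If `A` is an
ℵ₀-ideal subalgebra of `B` with `l[A/ℐ] ⊆ A`, then `A/ℐ = π '' A` is an ℵ₀-ideal
subalgebra of `B/ℐ = Q`. -/
theorem quotient_lifting_aleph0Ideal {B Q : Type*} [BooleanAlgebra B] [BooleanAlgebra Q]
    (π : BoundedLatticeHom B Q) (hsurj : Function.Surjective π)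
    (l : BoundedLatticeHom Q B) (hlift : ∀ q : Q, π (l q) = q)
    (A : Set B) (hA : IsSubalg A) (hAid : Aleph0Ideal A)
    (hlA : ∀ a ∈ A, l (π a) ∈ A) :
    Aleph0Ideal (π '' A) := by
  intro q _ hq
  have hlq : l q ∉ A := fun h => hq ⟨l q, h, hlift q⟩
  obtain ⟨C, hCcount, hCA, hCle, hCcof⟩ := hAid (l q) (Set.mem_univ _) hlq
  refine ⟨π '' C, hCcount.image π, Set.image_mono (f := π) hCA, ?_, ?_⟩
  · rintro c ⟨c', hc', rfl⟩
    have := OrderHomClass.mono π (hCle c' hc')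
    simpa [hlift q] using this
  · rintro x ⟨a, ha, rfl⟩ hxq
    have ha' : l (π a) ∈ A := hlA a ha
    have hle : l (π a) ≤ l q := OrderHomClass.mono l hxq
    obtain ⟨c, hc, hac⟩ := hCcof _ ha' hle
    exact ⟨π c, Set.mem_image_of_mem π hc, by
      have := OrderHomClass.mono π hac
      simpa [hlift (π a)] using this⟩
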